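/- For every nominal set Z there exist a strong nominal set X and a surjective equivariant map e : X → Z that preserves least supports, i.e. supp_Z(e(x)) = supp_X(x) for all x ∈ X. -/

import Mathlib

universe u

/-- The group of permutations of the atoms `𝔸 = ℕ` that move only finitely many
atoms. -/
def FinPerm : Subgroup (Equiv.Perm ℕ) where
  carrier := {π : Equiv.Perm ℕ | {a : ℕ | π a ≠ a}.Finite}
  one_mem' := by
    show Set.Finite {a : ℕ | (1 : Equiv.Perm ℕ) a ≠ a}
    have h : {a : ℕ | (1 : Equiv.Perm ℕ) a ≠ a} = ∅ := by
      ext a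
      simp
    rw [h]
    exact Set.finite_empty
  mul_mem' := by
    intro π σ hπ hσ
    apply (hπ.union hσ).subset
    intro a ha
    by_contra h
    simp only [Set.mem_union, Set.mem_setOf_eq, not_or, not_not] at h
    exact ha (by simp only [Equiv.Perm.mul_apply, h.2, h.1])
  inv_mem' := by
    intro π hπ
    have : {a : ℕ | π⁻¹ a ≠ a} = {a : ℕ | π a ≠ a} := by
      ext a
      simp only [Set.mem_setOf_eq, ne_eq, Equiv.Perm.inv_eq_iff_eq]
      exact not_congr eq_comm
    show Set.Finite {a : ℕ | π⁻¹ a ≠ a}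
    rw [this]
    exact hπ

/-- A nominal set: a set with an action of the group of finitary permutations of
atoms for which every element has a finite support. -/
structure NominalSet : Type (u + 1) where
  carrier : Type u
  act : FinPerm → carrier → carrier
  act_one : ∀ x : carrier, act 1 x = x
  act_mul : ∀ (π σ : FinPerm) (x : carrier), act (π * σ) x = act π (act σ x)
  finitely_supported : ∀ x : carrier, ∃ s : Finset ℕ,
    ∀ π : FinPerm, (∀ a ∈ s, (π : Equiv.Perm ℕ) a = a) → act π x = x

/-- `S` is a support of `x`. -/
def NominalSet.IsSupport (N : NominalSet.{u}) (S : Set ℕ) (x : N.carrier) : Prop :=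
  ∀ π : FinPerm, (∀ a ∈ S, (π : Equiv.Perm ℕ) a = a) → N.act π x = x

/-- The least support of `x`: the intersection of all finite supports of `x`. -/
def NominalSet.supp (N : NominalSet.{u}) (x : N.carrier) : Set ℕ :=
  ⋂₀ {S : Set ℕ | S.Finite ∧ N.IsSupport S x}

/-- A nominal set is strong if a finitary permutation fixes an element iff it fixes
its least support pointwise. -/
def NominalSet.Strong (N : NominalSet.{u}) : Prop :=
  ∀ (x : N.carrier) (π : FinPerm),
    (∀ a ∈ N.supp x, (π : Equiv.Perm ℕ) a = a) ↔ N.act π x = x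

/-- An equivariant map of nominal sets. -/
def Equivariant (X Z : NominalSet.{u}) (f : X.carrier → Z.carrier) : Prop :=
  ∀ (π : FinPerm) (x : X.carrier), f (X.act π x) = Z.act π (f x)

section Aux

lemma NominalSet.act_inv_act (N : NominalSet.{u}) (π : FinPerm) (x : N.carrier) :
    N.act π⁻¹ (N.act π x) = x := by
  rw [← N.act_mul, inv_mul_cancel, N.act_one]

/-- swaps as finitary permutations -/
def fswap (a b : ℕ) : FinPerm :=
  ⟨Equiv.swap a b, by
    show Set.Finite {c : ℕ | Equiv.swap a b c ≠ c}
    apply ((Set.finite_singleton b).insert a).subset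
    intro c hc
    by_contra h
    simp only [Set.mem_insert_iff, Set.mem_singleton_iff, not_or] at h
    exact hc (Equiv.swap_apply_of_ne_of_ne h.1 h.2)⟩

@[simp] lemma fswap_coe (a b : ℕ) : ((fswap a b : FinPerm) : Equiv.Perm ℕ) = Equiv.swap a b := rfl

lemma NominalSet.IsSupport.mono (N : NominalSet.{u}) {S T : Set ℕ} {x : N.carrier}
    (h : N.IsSupport S x) (hst : S ⊆ T) : N.IsSupport T x :=
  fun π hπ => h π fun a ha => hπ a (hst ha)

section Swap

variable (N : NominalSet.{u}) {S T : Set ℕ} {x : N.carrier}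

lemma act_fswap_mixed (hS : N.IsSupport S x) (hT : N.IsSupport T x)
    (hSf : S.Finite) (hTf : T.Finite)
    {a b : ℕ} (haS : a ∈ S) (haT : a ∉ T) (hbS : b ∉ S) (hbT : b ∈ T) :
    N.act (fswap a b) x = x := by
  obtain ⟨c, hc⟩ := ((hSf.union hTf).union ((Set.finite_singleton b).insert a)).infinite_compl.nonempty
  simp only [Set.mem_compl_iff, Set.mem_union, Set.mem_insert_iff,
    Set.mem_singleton_iff, not_or] at hc
  obtain ⟨⟨hcS, hcT⟩, hca, hcb⟩ := hc
  have hba : b ≠ a := fun h => hbS (h ▸ haS)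
  have hbc : b ≠ c := fun h => hcb h.symm
  have h3 := Equiv.swap_mul_swap_mul_swap hbc hba
  have hid : fswap a b = fswap a c * (fswap b c * fswap a c) := by
    apply Subtype.ext
    push_cast
    simp only [fswap_coe]
    rw [Equiv.swap_comm a c, ← mul_assoc]
    exact h3.symm
  have h1 : N.act (fswap a c) x = x := by
    apply hT
    intro t ht
    exact Equiv.swap_apply_of_ne_of_ne (fun h => haT (h ▸ ht)) (fun h => hcT (h ▸ ht))
  have h2 : N.act (fswap b c) x = x := by
    apply hS
    intro t ht
    exact Equiv.swap_apply_of_ne_of_ne (fun h => hbS (h ▸ ht)) (fun h => hcS (h ▸ ht))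
  rw [hid, N.act_mul, N.act_mul, h1, h2, h1]

lemma act_fswap_of_notMem_inter (hS : N.IsSupport S x) (hT : N.IsSupport T x)
    (hSf : S.Finite) (hTf : T.Finite)
    {a b : ℕ} (ha : a ∉ S ∩ T) (hb : b ∉ S ∩ T) :
    N.act (fswap a b) x = x := by
  by_cases haS : a ∈ S
  · have haT : a ∉ T := fun h => ha ⟨haS, h⟩
    by_cases hbT : b ∈ T
    · exact act_fswap_mixed N hS hT hSf hTf haS haT (fun h => hb ⟨h, hbT⟩) hbT
    · apply hT
      intro t ht
      exact Equiv.swap_apply_of_ne_of_ne (fun h => haT (h ▸ ht)) (fun h => hbT (h ▸ ht))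
  · by_cases hbS : b ∈ S
    · have hbT : b ∉ T := fun h => hb ⟨hbS, h⟩
      by_cases haT : a ∈ T
      · have : fswap a b = fswap b a := Subtype.ext (Equiv.swap_comm a b)
        rw [this]
        exact act_fswap_mixed N hS hT hSf hTf hbS hbT haS haT
      · apply hT
        intro t ht
        exact Equiv.swap_apply_of_ne_of_ne (fun h => haT (h ▸ ht)) (fun h => hbT (h ▸ ht))
    · apply hS
      intro t ht
      exact Equiv.swap_apply_of_ne_of_ne (fun h => haS (h ▸ ht)) (fun h => hbS (h ▸ ht))

/-- A permutation fixing the intersection of two finite supports fixes the element. -/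
lemma act_eq_of_fixes_inter (hS : N.IsSupport S x) (hT : N.IsSupport T x)
    (hSf : S.Finite) (hTf : T.Finite) :
    N.IsSupport (S ∩ T) x := by
  intro π hπ
  have hfin : {a : ℕ | (π : Equiv.Perm ℕ) a ≠ a}.Finite := π.2
  -- strong induction on the number of moved points
  suffices h : ∀ (n : ℕ) (π : FinPerm), (hfin' : {a : ℕ | (π : Equiv.Perm ℕ) a ≠ a}.Finite) →
      hfin'.toFinset.card ≤ n → (∀ a ∈ S ∩ T, (π : Equiv.Perm ℕ) a = a) → N.act π x = x by
    exact h hfin.toFinset.card π hfin le_rfl hπ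
  clear hπ hfin π
  intro n
  induction n with
  | zero =>
    intro π hfin hcard _
    have : π = 1 := by
      apply Subtype.ext
      apply Equiv.ext
      intro a
      by_contra h
      have : a ∈ hfin.toFinset := by simpa using h
      simp [Finset.card_eq_zero.mp (Nat.le_zero.mp hcard)] at this
    rw [this, N.act_one]
  | succ n ih =>
    intro π hfin hcard hfix
    by_cases hone : ∀ a : ℕ, (π : Equiv.Perm ℕ) a = a
    · have : π = 1 := Subtype.ext (Equiv.ext hone)
      rw [this, N.act_one]
    · push_neg at hone
      obtain ⟨a, ha⟩ := hone
      have haI : a ∉ S ∩ T := fun h => ha (hfix a h)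
      have hpaI : (π : Equiv.Perm ℕ) a ∉ S ∩ T := by
        intro h
        have := hfix _ h
        exact ha ((π : Equiv.Perm ℕ).injective this)
      set π' : FinPerm := fswap a ((π : Equiv.Perm ℕ) a) * π with hπ'
      have hπ'coe : ∀ c : ℕ, (π' : Equiv.Perm ℕ) c = Equiv.swap a ((π : Equiv.Perm ℕ) a) ((π : Equiv.Perm ℕ) c) := by
        intro c; rfl
      have hmoved : ∀ c : ℕ, (π' : Equiv.Perm ℕ) c ≠ c →
          (π : Equiv.Perm ℕ) c ≠ c ∧ c ≠ a := by
        intro c hc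
        have hca : c ≠ a := by
          rintro rfl
          exact hc (by rw [hπ'coe, Equiv.swap_apply_right])
        refine ⟨?_, hca⟩
        intro hfc
        apply hc
        rw [hπ'coe, hfc]
        apply Equiv.swap_apply_of_ne_of_ne hca
        intro h
        exact ha ((π : Equiv.Perm ℕ).injective (by rw [← h, hfc]))
      have hfin' : {c : ℕ | (π' : Equiv.Perm ℕ) c ≠ c}.Finite := π'.2
      have hsub : hfin'.toFinset ⊆ hfin.toFinset.erase a := by
        intro c hc
        rw [Set.Finite.mem_toFinset] at hc
        obtain ⟨h1, h2⟩ := hmoved c hc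
        rw [Finset.mem_erase, Set.Finite.mem_toFinset]
        exact ⟨h2, h1⟩
      have hamem : a ∈ hfin.toFinset := by rw [Set.Finite.mem_toFinset]; exact ha
      have hcard' : hfin'.toFinset.card ≤ n := by
        calc hfin'.toFinset.card ≤ (hfin.toFinset.erase a).card := Finset.card_le_card hsub
          _ = hfin.toFinset.card - 1 := Finset.card_erase_of_mem hamem
          _ ≤ n := by omega
      have hfix' : ∀ c ∈ S ∩ T, (π' : Equiv.Perm ℕ) c = c := by
        intro c hcm
        rw [hπ'coe, hfix c hcm]
        exact Equiv.swap_apply_of_ne_of_ne (fun h => haI (h ▸ hcm)) (fun h => hpaI (h ▸ hcm))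
      have hstep := ih π' hfin' hcard' hfix'
      have hππ' : fswap a ((π : Equiv.Perm ℕ) a) * π' = π := by
        rw [hπ', ← mul_assoc]
        have : fswap a ((π : Equiv.Perm ℕ) a) * fswap a ((π : Equiv.Perm ℕ) a) = 1 :=
          Subtype.ext (Equiv.swap_mul_self _ _)
        rw [this, one_mul]
      rw [← hππ', N.act_mul, hstep]
      exact act_fswap_of_notMem_inter N hS hT hSf hTf haI hpaI

end Swap

end Aux

lemma NominalSet.supp_spec (N : NominalSet.{u}) (x : N.carrier) :
    (N.supp x).Finite ∧ N.IsSupport (N.supp x) x := by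
  obtain ⟨s, hs⟩ := N.finitely_supported x
  have hsIsSupp : N.IsSupport (↑s : Set ℕ) x := fun π h => hs π (fun a ha => h a (by simpa using ha))
  have hmem : (↑s : Set ℕ) ∈ {S : Set ℕ | S.Finite ∧ N.IsSupport S x} := ⟨s.finite_toSet, hsIsSupp⟩
  have hsub : N.supp x ⊆ ↑s := Set.sInter_subset_of_mem hmem
  have key : ∀ u : Finset ℕ, ∃ T : Set ℕ, T.Finite ∧ N.IsSupport T x ∧ T ⊆ ↑s ∧
      ∀ a ∈ u, a ∉ N.supp x → a ∉ T := by
    intro u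
    induction u using Finset.induction_on with
    | empty => exact ⟨↑s, s.finite_toSet, hsIsSupp, subset_rfl, by simp⟩
    | @insert a u ha ih =>
      obtain ⟨T, hTf, hTs, hTsub, hTa⟩ := ih
      by_cases hamem : a ∈ N.supp x
      · refine ⟨T, hTf, hTs, hTsub, ?_⟩
        intro b hb hbn
        rcases Finset.mem_insert.mp hb with rfl | hb
        · exact absurd hamem hbn
        · exact hTa b hb hbn
      · have : ∃ Ta ∈ {S : Set ℕ | S.Finite ∧ N.IsSupport S x}, a ∉ Ta := by
          by_contra h
          push_neg at h
          exact hamem (Set.mem_sInter.mpr h)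
        obtain ⟨Ta, ⟨hTaf, hTas⟩, haTa⟩ := this
        refine ⟨T ∩ Ta, hTf.subset Set.inter_subset_left,
          act_eq_of_fixes_inter N hTs hTas hTf hTaf,
          Set.inter_subset_left.trans hTsub, ?_⟩
        intro b hb hbn
        rcases Finset.mem_insert.mp hb with rfl | hb
        · exact fun h => haTa h.2
        · exact fun h => hTa b hb hbn h.1
  obtain ⟨T, hTf, hTs, hTsub, hTa⟩ := key s
  have hTsupp : T ⊆ N.supp x := by
    intro c hc
    by_contra hcn
    exact hTa c (by simpa using hTsub hc) hcn hc
  have hsuppT : N.supp x ⊆ T := Set.sInter_subset_of_mem ⟨hTf, hTs⟩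
  have heq : N.supp x = T := le_antisymm hsuppT hTsupp
  rw [heq]
  exact ⟨hTf, hTs⟩

lemma NominalSet.supp_finite (N : NominalSet.{u}) (x : N.carrier) : (N.supp x).Finite :=
  (N.supp_spec x).1

lemma NominalSet.supp_isSupport (N : NominalSet.{u}) (x : N.carrier) :
    N.IsSupport (N.supp x) x :=
  (N.supp_spec x).2

lemma NominalSet.supp_subset (N : NominalSet.{u}) {S : Set ℕ} {x : N.carrier}
    (hf : S.Finite) (hs : N.IsSupport S x) : N.supp x ⊆ S :=
  Set.sInter_subset_of_mem ⟨hf, hs⟩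

lemma NominalSet.isSupport_image (N : NominalSet.{u}) (π : FinPerm) {S : Set ℕ}
    {x : N.carrier} (h : N.IsSupport S x) :
    N.IsSupport ((π : Equiv.Perm ℕ) '' S) (N.act π x) := by
  intro σ hσ
  have hfix : N.act (π⁻¹ * σ * π) x = x := by
    apply h
    intro a ha
    have h1 : ((π⁻¹ * σ * π : FinPerm) : Equiv.Perm ℕ) a
        = ((π : Equiv.Perm ℕ))⁻¹ ((σ : Equiv.Perm ℕ) ((π : Equiv.Perm ℕ) a)) := rfl
    rw [h1, hσ _ ⟨a, ha, rfl⟩]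
    simp
  have hgrp : π * (π⁻¹ * σ * π) = σ * π := by group
  calc N.act σ (N.act π x) = N.act (σ * π) x := (N.act_mul σ π x).symm
    _ = N.act (π * (π⁻¹ * σ * π)) x := by rw [hgrp]
    _ = N.act π (N.act (π⁻¹ * σ * π) x) := N.act_mul _ _ x
    _ = N.act π x := by rw [hfix]

lemma NominalSet.supp_act_subset (N : NominalSet.{u}) (π : FinPerm) (x : N.carrier) :
    N.supp (N.act π x) ⊆ (π : Equiv.Perm ℕ) '' N.supp x :=
  N.supp_subset ((N.supp_finite x).image _) (N.isSupport_image π (N.supp_isSupport x))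

lemma NominalSet.supp_act (N : NominalSet.{u}) (π : FinPerm) (x : N.carrier) :
    N.supp (N.act π x) = (π : Equiv.Perm ℕ) '' N.supp x := by
  apply le_antisymm (N.supp_act_subset π x)
  have h := N.supp_act_subset π⁻¹ (N.act π x)
  rw [N.act_inv_act] at h
  have h2 := Set.image_mono (f := ⇑(π : Equiv.Perm ℕ)) h
  refine h2.trans ?_
  rw [← Set.image_comp]
  intro c hc
  obtain ⟨d, hd, rfl⟩ := hc
  have : ((π : Equiv.Perm ℕ) ∘ ((π⁻¹ : FinPerm) : Equiv.Perm ℕ)) d = d := by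
    simp
  rwa [this]

lemma list_map_eq_self {f : ℕ → ℕ} {l : List ℕ} (h : ∀ a ∈ l, f a = a) : l.map f = l := by
  induction l with
  | nil => rfl
  | cons b t ih =>
    rw [List.map_cons, h b List.mem_cons_self, ih (fun a ha => h a (List.mem_cons_of_mem b ha))]

lemma eq_self_of_list_map {f : ℕ → ℕ} {l : List ℕ} (h : l.map f = l) : ∀ a ∈ l, f a = a := by
  induction l with
  | nil => simp
  | cons b t ih =>
    simp only [List.map_cons, List.cons.injEq] at h
    intro a ha
    rcases List.mem_cons.mp ha with rfl | ha
    · exact h.1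
    · exact ih h.2 a ha

/-- The strong cover of a nominal set: pairs of an element together with a list
enumerating its least support. -/
def NominalSet.Cover (Z : NominalSet.{u}) : NominalSet.{u} where
  carrier := {p : Z.carrier × List ℕ // (p.2.toFinset : Set ℕ) = Z.supp p.1}
  act π x := ⟨(Z.act π x.1.1, x.1.2.map (π : Equiv.Perm ℕ)), by
    have h1 : ((x.1.2.map ⇑(π : Equiv.Perm ℕ)).toFinset : Set ℕ)
        = (π : Equiv.Perm ℕ) '' (x.1.2.toFinset : Set ℕ) := by
      ext c
      constructor
      · intro hc
        obtain ⟨a, ha, rfl⟩ := List.mem_map.mp (by simpa using hc)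
        exact ⟨a, by simpa using ha, rfl⟩
      · rintro ⟨a, ha, rfl⟩
        have haL : a ∈ x.1.2 := by simpa using ha
        have hmem : (π : Equiv.Perm ℕ) a ∈ x.1.2.map ⇑(π : Equiv.Perm ℕ) :=
          List.mem_map_of_mem haL
        simpa using hmem
    rw [h1, x.2, ← Z.supp_act]⟩
  act_one x := Subtype.ext (Prod.ext (Z.act_one _) (by simp))
  act_mul π σ x := Subtype.ext (Prod.ext (Z.act_mul π σ _) (by simp [List.map_map]))
  finitely_supported x := by
    refine ⟨x.1.2.toFinset, fun π hπ => ?_⟩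
    apply Subtype.ext
    apply Prod.ext
    · apply Z.supp_isSupport
      intro a ha
      apply hπ
      rw [← x.2] at ha
      simpa using ha
    · exact list_map_eq_self (fun a ha => hπ a (by simpa using ha))

lemma NominalSet.cover_isSupport (Z : NominalSet.{u}) (x : (Cover Z).carrier) :
    (Cover Z).IsSupport (↑x.1.2.toFinset) x := by
  intro π hπ
  apply Subtype.ext
  apply Prod.ext
  · apply Z.supp_isSupport
    intro a ha
    exact hπ a (by rw [← x.2] at ha; exact ha)
  · exact list_map_eq_self (fun a ha => hπ a (by simpa using ha))

lemma NominalSet.cover_supp (Z : NominalSet.{u}) (x : (Cover Z).carrier) :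
    (Cover Z).supp x = ↑x.1.2.toFinset := by
  apply le_antisymm
  · exact (Cover Z).supp_subset x.1.2.toFinset.finite_toSet (Z.cover_isSupport x)
  · apply Set.subset_sInter
    rintro S ⟨hSf, hSs⟩
    intro a haL
    by_contra haS
    obtain ⟨b, hb⟩ := (hSf.union x.1.2.toFinset.finite_toSet).infinite_compl.nonempty
    simp only [Set.mem_compl_iff, Set.mem_union, not_or, Finset.mem_coe] at hb
    obtain ⟨hbS, hbL⟩ := hb
    have hswap : (Cover Z).act (fswap a b) x = x := by
      apply hSs
      intro t ht
      exact Equiv.swap_apply_of_ne_of_ne (fun h => haS (h ▸ ht)) (fun h => hbS (h ▸ ht))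
    have hL : x.1.2.map ⇑(Equiv.swap a b) = x.1.2 := congrArg (fun y => y.1.2) hswap
    have hmem : a ∈ x.1.2 := by simpa using haL
    have : Equiv.swap a b a ∈ x.1.2 := hL ▸ List.mem_map_of_mem (f := ⇑(Equiv.swap a b)) hmem
    rw [Equiv.swap_apply_left] at this
    exact hbL (by simpa using this)

lemma NominalSet.cover_strong (Z : NominalSet.{u}) : (Cover Z).Strong := by
  intro x π
  constructor
  · intro h
    apply Z.cover_isSupport x
    intro a ha
    exact h a (by rw [Z.cover_supp]; exact ha)
  · intro h a ha
    rw [Z.cover_supp] at ha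
    have hL : x.1.2.map ⇑(π : Equiv.Perm ℕ) = x.1.2 := congrArg (fun y => y.1.2) h
    exact eq_self_of_list_map hL a (by simpa using ha)

/-- Every nominal set is a quotient of a strong nominal set via a surjective
equivariant map preserving least supports. -/
theorem exists_strong_cover (Z : NominalSet.{u}) :
    ∃ (X : NominalSet.{u}) (e : X.carrier → Z.carrier),
      X.Strong ∧ Function.Surjective e ∧ Equivariant X Z e ∧
      ∀ x : X.carrier, Z.supp (e x) = X.supp x := by
  refine ⟨NominalSet.Cover Z, fun x => x.1.1, Z.cover_strong, ?_, fun π x => rfl, ?_⟩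
  · intro z
    refine ⟨⟨(z, (Z.supp_finite z).toFinset.toList), ?_⟩, rfl⟩
    rw [Finset.toList_toFinset, Set.Finite.coe_toFinset]
  · intro x
    rw [Z.cover_supp]
    exact x.2.symm
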